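/- Let G be a graph with adjacency matrix A and suppose A + λI is positive definite for some λ > 0. Then α(G) ≤ λ · eᵀ (A + λI)⁻¹ e, where e is the all-ones vector, with equality if and only if there exists an independent set C such that every vertex not in C is adjacent to exactly λ vertices of C. -/

import Mathlib

open scoped Classical
open Matrix Finset

/-- The independence number of a finite simple graph. -/
noncomputable def indepNum {V : Type*} [Fintype V] (G : SimpleGraph V) : ℕ :=
  sSup {k | ∃ S : Finset V, (∀ u ∈ S, ∀ v ∈ S, u ≠ v → ¬ G.Adj u v) ∧ S.card = k}

lemma indepNum_bddAbove {n : ℕ} (G : SimpleGraph (Fin n)) :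
    BddAbove {k | ∃ S : Finset (Fin n),
      (∀ u ∈ S, ∀ v ∈ S, u ≠ v → ¬ G.Adj u v) ∧ S.card = k} := by
  refine ⟨n, ?_⟩
  rintro k ⟨S, -, rfl⟩
  simpa using S.card_le_univ

lemma exists_max_indep {n : ℕ} (G : SimpleGraph (Fin n)) :
    ∃ S : Finset (Fin n),
      (∀ u ∈ S, ∀ v ∈ S, u ≠ v → ¬ G.Adj u v) ∧ S.card = indepNum G := by
  have h : indepNum G ∈ {k | ∃ S : Finset (Fin n),
      (∀ u ∈ S, ∀ v ∈ S, u ≠ v → ¬ G.Adj u v) ∧ S.card = k} :=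
    Nat.sSup_mem ⟨0, ∅, by simp, by simp⟩ (indepNum_bddAbove G)
  exact h

lemma card_le_indepNum {n : ℕ} (G : SimpleGraph (Fin n)) {C : Finset (Fin n)}
    (hC : ∀ u ∈ C, ∀ v ∈ C, u ≠ v → ¬ G.Adj u v) :
    C.card ≤ indepNum G :=
  le_csSup (indepNum_bddAbove G) ⟨C, hC, rfl⟩

/-- Corollary 4.5: if A + λI is positive definite for some λ > 0, then
α(G) ≤ λ·eᵀ(A+λI)⁻¹e, with equality iff there is an independent set C such that
every vertex not in C has exactly λ neighbours in C. -/
theorem stmt9 (n : ℕ) (G : SimpleGraph (Fin n)) (lam : ℝ) (hlam : 0 < lam)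
    (hpd : (G.adjMatrix ℝ + lam • (1 : Matrix (Fin n) (Fin n) ℝ)).PosDef) :
    (indepNum G : ℝ) ≤
        lam * ((fun _ => (1 : ℝ)) ⬝ᵥ
          (G.adjMatrix ℝ + lam • (1 : Matrix (Fin n) (Fin n) ℝ))⁻¹.mulVec fun _ => 1) ∧
      ((indepNum G : ℝ) =
          lam * ((fun _ => (1 : ℝ)) ⬝ᵥ
            (G.adjMatrix ℝ + lam • (1 : Matrix (Fin n) (Fin n) ℝ))⁻¹.mulVec fun _ => 1) ↔
        ∃ C : Finset (Fin n), (∀ u ∈ C, ∀ v ∈ C, u ≠ v → ¬ G.Adj u v) ∧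
          ∀ v ∉ C, ((C.filter fun u => G.Adj v u).card : ℝ) = lam) := by
  classical
  set M := G.adjMatrix ℝ + lam • (1 : Matrix (Fin n) (Fin n) ℝ) with hMdef
  set e : Fin n → ℝ := fun _ => 1 with hedef
  set z : Fin n → ℝ := M⁻¹.mulVec e with hzdef
  have hunit : IsUnit M.det := hpd.det_pos.ne'.isUnit
  have hMz : M.mulVec z = e := by
    rw [hzdef, Matrix.mulVec_mulVec, Matrix.mul_nonsing_inv M hunit, Matrix.one_mulVec]
  -- indicator vector
  let ind : Finset (Fin n) → (Fin n → ℝ) := fun S v => if v ∈ S then 1 else 0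
  -- M applied to an indicator
  have hMind : ∀ (S : Finset (Fin n)) (v : Fin n),
      M.mulVec (ind S) v = ((S.filter fun u => G.Adj v u).card : ℝ)
        + lam * (if v ∈ S then 1 else 0) := by
    intro S v
    have hA : (G.adjMatrix ℝ).mulVec (ind S) v
        = ((S.filter fun u => G.Adj v u).card : ℝ) := by
      simp only [Matrix.mulVec, dotProduct, SimpleGraph.adjMatrix_apply, ind]
      have h1 : ∀ u : Fin n, (if G.Adj v u then (1:ℝ) else 0) * (if u ∈ S then 1 else 0)
          = if u ∈ S ∧ G.Adj v u then 1 else 0 := by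
        intro u
        by_cases h1 : G.Adj v u <;> by_cases h2 : u ∈ S <;> simp [h1, h2]
      rw [Finset.sum_congr rfl fun u _ => h1 u, Finset.sum_boole]
      norm_cast
      congr 1
      ext u
      simp [and_comm]
    rw [hMdef]
    simp only [Matrix.add_mulVec, Matrix.smul_mulVec, Matrix.one_mulVec,
      Pi.add_apply, Pi.smul_apply, smul_eq_mul]
    rw [hA]
  -- e ⬝ᵥ indicator = card
  have hdot_ind : ∀ (S : Finset (Fin n)), e ⬝ᵥ ind S = (S.card : ℝ) := by
    intro S
    simp only [dotProduct, hedef, one_mul, ind]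
    rw [Finset.sum_boole]
    norm_cast
    congr 1
    ext u
    simp
  -- independent set: M.mulVec (ind S) at v ∈ S equals lam
  have hMindep : ∀ (S : Finset (Fin n)),
      (∀ u ∈ S, ∀ v ∈ S, u ≠ v → ¬ G.Adj u v) →
      ∀ v ∈ S, M.mulVec (ind S) v = lam := by
    intro S hS v hv
    rw [hMind S v, if_pos hv]
    have hfe : S.filter (fun u => G.Adj v u) = ∅ := by
      rw [Finset.filter_eq_empty_iff]
      intro u hu hadj
      rcases eq_or_ne v u with rfl | hne
      · exact G.irrefl hadj
      · exact hS v hv u hu hne hadj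
    rw [hfe]
    simp
  -- key inequality from positive definiteness, for any independent set S
  have key : ∀ (S : Finset (Fin n)),
      (∀ u ∈ S, ∀ v ∈ S, u ≠ v → ¬ G.Adj u v) →
      (S.card : ℝ) ≤ lam * (e ⬝ᵥ z) ∧
        ((S.card : ℝ) = lam * (e ⬝ᵥ z) → ind S = lam • z) := by
    intro S hS
    set w : Fin n → ℝ := ind S - lam • z with hwdef
    have hMw : M.mulVec w = M.mulVec (ind S) - lam • e := by
      rw [hwdef, Matrix.mulVec_sub, Matrix.mulVec_smul, hMz]
    have hdotMx : ind S ⬝ᵥ M.mulVec (ind S) = lam * S.card := by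
      simp only [dotProduct]
      have h2 : ∀ v : Fin n, ind S v * M.mulVec (ind S) v
          = if v ∈ S then lam else 0 := by
        intro v
        by_cases hv : v ∈ S
        · simp only [ind, if_pos hv, one_mul]
          rw [hMindep S hS v hv]
        · simp [ind, if_neg hv]
      rw [Finset.sum_congr rfl fun v _ => h2 v, Finset.sum_ite_mem,
        Finset.univ_inter, Finset.sum_const, nsmul_eq_mul, mul_comm]
    have hdot_e_ind : ind S ⬝ᵥ e = (S.card : ℝ) := by
      rw [dotProduct_comm]; exact hdot_ind S
    -- z ⬝ᵥ M.mulVec x = e ⬝ᵥ x  (symmetry)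
    have hsym : ∀ x : Fin n → ℝ, z ⬝ᵥ M.mulVec x = e ⬝ᵥ x := by
      intro x
      rw [Matrix.dotProduct_mulVec]
      congr 1
      rw [← Matrix.mulVec_transpose]
      have hMt : Mᵀ = M := by
        have h3 := hpd.1
        rwa [Matrix.IsHermitian, Matrix.conjTranspose_eq_transpose_of_trivial] at h3
      rw [hMt, hMz]
    have hQ : w ⬝ᵥ M.mulVec w = lam * (lam * (e ⬝ᵥ z) - S.card) := by
      rw [hMw, hwdef]
      simp only [sub_dotProduct, dotProduct_sub, smul_dotProduct,
        dotProduct_smul, smul_eq_mul]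
      rw [hdotMx, hdot_e_ind, hsym (ind S), hdot_ind S, dotProduct_comm z e]
      ring
    have hQ0 : 0 ≤ w ⬝ᵥ M.mulVec w := by
      rcases eq_or_ne w 0 with h | h
      · simp [h]
      · have h4 := hpd.dotProduct_mulVec_pos h
        simpa using h4.le
    constructor
    · nlinarith [hQ0, hQ]
    · intro heq
      have hQz : w ⬝ᵥ M.mulVec w = 0 := by rw [hQ, heq]; ring
      have hw0 : w = 0 := by
        by_contra h
        have h5 := hpd.dotProduct_mulVec_pos h
        simp only [star_trivial] at h5
        exact absurd hQz (ne_of_gt h5)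
      have h6 : ind S - lam • z = 0 := hw0
      exact sub_eq_zero.mp h6
  -- main proof
  obtain ⟨S, hSind, hScard⟩ := exists_max_indep G
  have hineq : (indepNum G : ℝ) ≤ lam * (e ⬝ᵥ z) := by
    have := (key S hSind).1
    rwa [hScard] at this
  refine ⟨hineq, ?_, ?_⟩
  · -- equality → exists C
    intro heq
    have hSeq : (S.card : ℝ) = lam * (e ⬝ᵥ z) := by rw [hScard]; exact heq
    have hind := (key S hSind).2 hSeq
    refine ⟨S, hSind, ?_⟩
    intro v hv
    have hMe : M.mulVec (ind S) = lam • e := by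
      rw [hind, Matrix.mulVec_smul, hMz]
    have h7 := congrFun hMe v
    rw [hMind S v, if_neg hv] at h7
    simp only [Pi.smul_apply, hedef, smul_eq_mul, mul_one, mul_zero, add_zero] at h7
    linarith
  · -- exists C → equality
    rintro ⟨C, hCind, hCdeg⟩
    have hMC : M.mulVec (ind C) = lam • e := by
      funext v
      by_cases hv : v ∈ C
      · rw [hMindep C hCind v hv]; simp [hedef]
      · rw [hMind C v, if_neg hv, hCdeg v hv]; simp [hedef]
    have hzero : M.mulVec (ind C - lam • z) = 0 := by
      rw [Matrix.mulVec_sub, Matrix.mulVec_smul, hMz, hMC, sub_self]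
    have hCz : ind C = lam • z := by
      have h8 : M⁻¹.mulVec (M.mulVec (ind C - lam • z)) = 0 := by
        rw [hzero, Matrix.mulVec_zero]
      rw [Matrix.mulVec_mulVec, Matrix.nonsing_inv_mul M hunit, Matrix.one_mulVec] at h8
      exact sub_eq_zero.mp h8
    have hCcard : (C.card : ℝ) = lam * (e ⬝ᵥ z) := by
      rw [← hdot_ind C, hCz, dotProduct_smul, smul_eq_mul]
    have hle : (C.card : ℝ) ≤ (indepNum G : ℝ) := by
      exact_mod_cast card_le_indepNum G hCind
    linarith
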